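/- For any x, x' ∈ ℂ with |x| ≥ x_min > 0 and |x'| ≥ x_min, and any σ > 0, d ∈ ℂ, the Bhattacharyya coefficient B(x,x';σ) = (2·√(|x|²+σ²)·√(|x'|²+σ²))/(|x|²+|x'|²+2σ²) · exp(-|d|²|x-x'|²/(2(|x|²+|x'|²+2σ²))) satisfies B(x,x';σ) ≤ B(x,x';0) · (1 + σ²/x_min²) · exp(|d|²σ²·(|x|+|x'|)²/((|x|²+|x'|²+2σ²)(|x|²+|x'|²))). -/

import Mathlib

open Real Complex

/-- Bhattacharyya coefficient of the Ricean fading channel with specular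
component `d`, inputs `x, x'` and noise standard deviation `σ`. -/
noncomputable def bhatt (d x x' : ℂ) (σ : ℝ) : ℝ :=
  (2 * Real.sqrt (‖x‖ ^ 2 + σ ^ 2) * Real.sqrt (‖x'‖ ^ 2 + σ ^ 2))
      / (‖x‖ ^ 2 + ‖x'‖ ^ 2 + 2 * σ ^ 2)
    * Real.exp (-(‖d‖) ^ 2 * (‖x - x'‖) ^ 2
        / (2 * (‖x‖ ^ 2 + ‖x'‖ ^ 2 + 2 * σ ^ 2)))

set_option maxHeartbeats 1000000 in
private lemma bhatt_aux (a b e D σ xmin : ℝ) (hσ : 0 < σ) (hxmin : 0 < xmin)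
    (hx : xmin ≤ a) (hx' : xmin ≤ b) (hD : 0 ≤ D) (he0 : 0 ≤ e) (he : e ≤ a + b) :
    2 * Real.sqrt (a^2+σ^2) * Real.sqrt (b^2+σ^2) / (a^2+b^2+2*σ^2)
        * Real.exp (-D^2*e^2/(2*(a^2+b^2+2*σ^2)))
      ≤ 2*a*b/(a^2+b^2) * Real.exp (-D^2*e^2/(2*(a^2+b^2))) * (1+σ^2/xmin^2)
        * Real.exp (D^2*σ^2*(a+b)^2/((a^2+b^2+2*σ^2)*(a^2+b^2))) := by
  have ha : (0:ℝ) < a := lt_of_lt_of_le hxmin hx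
  have hb : (0:ℝ) < b := lt_of_lt_of_le hxmin hx'
  have hQ : (0:ℝ) < a^2 + b^2 := by positivity
  have hP : (0:ℝ) < a^2 + b^2 + 2*σ^2 := by positivity
  have ht : σ^2/xmin^2 * xmin^2 = σ^2 := div_mul_cancel₀ _ (by positivity)
  have hxa : xmin^2 ≤ a^2 := by nlinarith
  have hxb : xmin^2 ≤ b^2 := by nlinarith
  have htn : (0:ℝ) ≤ σ^2/xmin^2 := by positivity
  have hpref : 2 * Real.sqrt (a^2+σ^2) * Real.sqrt (b^2+σ^2) / (a^2+b^2+2*σ^2)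
      ≤ 2*(a*b*(1+σ^2/xmin^2))/(a^2+b^2) := by
    have hs1 : Real.sqrt (a^2+σ^2) * Real.sqrt (b^2+σ^2) ≤ a*b*(1+σ^2/xmin^2) := by
      rw [← Real.sqrt_mul (by positivity)]
      have h2 : (a^2+σ^2)*(b^2+σ^2) ≤ (a*b*(1+σ^2/xmin^2))^2 := by
        have h1 : a^2+σ^2 ≤ a^2*(1+σ^2/xmin^2) := by nlinarith [ht, hxa, htn]
        have h1' : b^2+σ^2 ≤ b^2*(1+σ^2/xmin^2) := by nlinarith [ht, hxb, htn]
        have hpos : (0:ℝ) ≤ 1+σ^2/xmin^2 := by positivity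
        nlinarith [mul_le_mul h1 h1' (by positivity) (by positivity)]
      calc Real.sqrt ((a^2+σ^2)*(b^2+σ^2)) ≤ Real.sqrt ((a*b*(1+σ^2/xmin^2))^2) :=
            Real.sqrt_le_sqrt h2
        _ = a*b*(1+σ^2/xmin^2) := Real.sqrt_sq (by positivity)
    have hnum : 2 * Real.sqrt (a^2+σ^2) * Real.sqrt (b^2+σ^2) ≤ 2*(a*b*(1+σ^2/xmin^2)) := by
      linarith
    have hden : a^2+b^2 ≤ a^2+b^2+2*σ^2 := by nlinarith [sq_nonneg σ]
    exact div_le_div₀ (by positivity) hnum hQ hden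
  have harg : -D^2*e^2/(2*(a^2+b^2+2*σ^2))
      ≤ -D^2*e^2/(2*(a^2+b^2)) + D^2*σ^2*(a+b)^2/((a^2+b^2+2*σ^2)*(a^2+b^2)) := by
    rw [← sub_le_iff_le_add']
    have key : -D^2*e^2/(2*(a^2+b^2+2*σ^2)) - (-D^2*e^2/(2*(a^2+b^2)))
        = D^2*e^2*σ^2/((a^2+b^2+2*σ^2)*(a^2+b^2)) := by
      field_simp
      ring
    rw [key]
    gcongr ?_ / _
    nlinarith [mul_le_mul_of_nonneg_left (pow_le_pow_left₀ he0 he 2)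
      (mul_nonneg (sq_nonneg D) (sq_nonneg σ))]
  have hexp : Real.exp (-D^2*e^2/(2*(a^2+b^2+2*σ^2)))
      ≤ Real.exp (-D^2*e^2/(2*(a^2+b^2)) + D^2*σ^2*(a+b)^2/((a^2+b^2+2*σ^2)*(a^2+b^2))) :=
    Real.exp_le_exp.mpr harg
  calc 2 * Real.sqrt (a^2+σ^2) * Real.sqrt (b^2+σ^2) / (a^2+b^2+2*σ^2)
        * Real.exp (-D^2*e^2/(2*(a^2+b^2+2*σ^2)))
      ≤ 2*(a*b*(1+σ^2/xmin^2))/(a^2+b^2)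
        * Real.exp (-D^2*e^2/(2*(a^2+b^2)) + D^2*σ^2*(a+b)^2/((a^2+b^2+2*σ^2)*(a^2+b^2))) :=
        mul_le_mul hpref hexp (Real.exp_pos _).le (by positivity)
    _ = 2*a*b/(a^2+b^2) * Real.exp (-D^2*e^2/(2*(a^2+b^2))) * (1+σ^2/xmin^2)
        * Real.exp (D^2*σ^2*(a+b)^2/((a^2+b^2+2*σ^2)*(a^2+b^2))) := by
        rw [Real.exp_add]; ring

set_option maxHeartbeats 1000000 in
theorem bhatt_le_noiseless (d x x' : ℂ) (σ xmin : ℝ) (hσ : 0 < σ)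
    (hxmin : 0 < xmin) (hx : xmin ≤ ‖x‖) (hx' : xmin ≤ ‖x'‖) :
    bhatt d x x' σ ≤ bhatt d x x' 0 * (1 + σ ^ 2 / xmin ^ 2)
      * Real.exp ((‖d‖) ^ 2 * σ ^ 2
          * (‖x‖ + ‖x'‖) ^ 2
          / ((‖x‖ ^ 2 + ‖x'‖ ^ 2 + 2 * σ ^ 2)
              * (‖x‖ ^ 2 + ‖x'‖ ^ 2))) := by
  have ha : (0:ℝ) < ‖x‖ := lt_of_lt_of_le hxmin hx
  have hb : (0:ℝ) < ‖x'‖ := lt_of_lt_of_le hxmin hx'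
  have he : ‖x - x'‖ ≤ ‖x‖ + ‖x'‖ := by
    have := norm_sub_le x x'
    simpa using this
  have h0 : bhatt d x x' 0
      = 2 * ‖x‖ * ‖x'‖
          / (‖x‖ ^ 2 + ‖x'‖ ^ 2)
        * Real.exp (-(‖d‖)^2 * (‖x - x'‖)^2
            / (2 * (‖x‖ ^ 2 + ‖x'‖ ^ 2))) := by
    simp [bhatt, Real.sqrt_sq ha.le, Real.sqrt_sq hb.le]
  rw [h0]
  have := bhatt_aux (‖x‖) (‖x'‖) (‖x - x'‖)
    (‖d‖) σ xmin hσ hxmin hx hx' (norm_nonneg d)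
    (norm_nonneg _) he
  calc bhatt d x x' σ
      = 2 * Real.sqrt ((‖x‖)^2+σ^2) * Real.sqrt ((‖x'‖)^2+σ^2)
          / ((‖x‖)^2+(‖x'‖)^2+2*σ^2)
        * Real.exp (-(‖d‖)^2*(‖x - x'‖)^2
            / (2*((‖x‖)^2+(‖x'‖)^2+2*σ^2))) := rfl
    _ ≤ _ := this
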